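/- arXiv:1910.04051 — 5 statements merged into one kernel-verified Lean document; each statement's English description precedes it below -/
import Mathlib

section
/- Let G be a finite group of order n generated by a subset S with e ∉ S and S = S⁻¹. Then the signed domination number of the Cayley graph Cay(S:G) equals 1 if and only if S = G \ {e} and n is odd. -/
/-- The Cayley graph `Cay(S:G)` of a group `G` with connection set `S`:
vertices are the group elements, and `a`, `b` are adjacent iff `a * b⁻¹ ∈ S`
(for an inverse-closed `S` not containing the identity). -/
def cayleyGraph {G : Type*} [Group G] (S : Set G) : SimpleGraph G :=
  SimpleGraph.fromRel (fun a b => a * b⁻¹ ∈ S)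

open Classical in
/-- The signed domination number of a finite simple graph: the minimum weight
`∑ v, g v` over all signed dominating functions, i.e. functions `g : V → {±1}`
whose sum over every closed neighborhood `N[v]` is positive. -/
noncomputable def signedDomNum {V : Type*} [Fintype V] (Γ : SimpleGraph V) : ℤ :=
  sInf {w : ℤ | ∃ g : V → ℤ, (∀ v, g v = 1 ∨ g v = -1) ∧
    (∀ v : V, 0 < g v + ∑ u : V, if Γ.Adj v u then g u else 0) ∧
    w = ∑ v : V, g v}

lemma cay_adj {G : Type*} [Group G] {S : Set G} (he : (1 : G) ∉ S) (hinv : S⁻¹ = S)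
    (a b : G) : (cayleyGraph S).Adj a b ↔ a * b⁻¹ ∈ S := by
  simp only [cayleyGraph, SimpleGraph.fromRel_adj]
  constructor
  · rintro ⟨hne, h | h⟩
    · exact h
    · rw [← hinv]; simpa using h
  · intro h
    refine ⟨?_, Or.inl h⟩
    rintro rfl
    simp only [mul_inv_cancel] at h
    exact he h

open Finset in
lemma cay_reg {G : Type*} [Group G] [Fintype G] {S : Set G} (he : (1 : G) ∉ S)
    (hinv : S⁻¹ = S) (u : G) [DecidablePred ((cayleyGraph S).Adj · u)]
    [DecidablePred ((cayleyGraph S).Adj · 1)] :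
    (univ.filter fun v => (cayleyGraph S).Adj v u).card
      = (univ.filter fun v => (cayleyGraph S).Adj v 1).card := by
  apply Finset.card_nbij' (fun v => v * u⁻¹) (fun v => v * u)
  · intro v hv
    simp only [mem_coe, mem_filter, mem_univ, true_and] at hv ⊢
    rw [cay_adj he hinv] at hv ⊢
    simpa using hv
  · intro v hv
    simp only [mem_coe, mem_filter, mem_univ, true_and] at hv ⊢
    rw [cay_adj he hinv] at hv ⊢
    simpa using hv
  · intro v _; simp
  · intro v _; simp

open Finset in
theorem stmt_0 {G : Type*} [Group G] [Fintype G] (n : ℕ)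
    (hn : Fintype.card G = n) (S : Set G)
    (hgen : Subgroup.closure S = ⊤) (he : (1 : G) ∉ S) (hinv : S⁻¹ = S) :
    signedDomNum (cayleyGraph S) = 1 ↔ (S = {(1 : G)}ᶜ ∧ Odd n) := by
  classical
  set Γ := cayleyGraph S with hΓ
  set A : Set ℤ := {w : ℤ | ∃ g : G → ℤ, (∀ v, g v = 1 ∨ g v = -1) ∧
    (∀ v : G, 0 < g v + ∑ u : G, if Γ.Adj v u then g u else 0) ∧
    w = ∑ v : G, g v} with hA
  have hsdn : signedDomNum Γ = sInf A := by
    rw [signedDomNum, hA]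
  have hbdd : BddBelow A := by
    refine ⟨-(n : ℤ), ?_⟩
    rintro w ⟨g, hg1, _, rfl⟩
    have h1 : ∑ _v : G, (-1 : ℤ) ≤ ∑ v : G, g v := by
      apply Finset.sum_le_sum
      intro v _
      rcases hg1 v with h | h <;> simp [h]
    have h2 : ∑ _v : G, (-1 : ℤ) = -(n : ℤ) := by simp [hn]
    linarith
  have hne : A.Nonempty := by
    refine ⟨(n : ℤ), fun _ => 1, fun v => Or.inl rfl, fun v => ?_, by simp [hn]⟩
    show (0 : ℤ) < 1 + ∑ u : G, if Γ.Adj v u then (1 : ℤ) else 0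
    have : (0 : ℤ) ≤ ∑ u : G, if Γ.Adj v u then (1 : ℤ) else 0 :=
      Finset.sum_nonneg fun u _ => by positivity
    linarith
  -- key sum identity
  have hsum : ∀ g : G → ℤ,
      (∑ v : G, (g v + ∑ u : G, if Γ.Adj v u then g u else 0))
        = ∑ v : G, g v + ((univ.filter fun v => Γ.Adj v 1).card : ℤ) * ∑ v : G, g v := by
    intro g
    rw [Finset.sum_add_distrib]
    congr 1
    rw [Finset.sum_comm]
    have : ∀ u : G, (∑ v : G, if Γ.Adj v u then g u else 0)
        = ((univ.filter fun v => Γ.Adj v 1).card : ℤ) * g u := by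
      intro u
      rw [← Finset.sum_filter, Finset.sum_const, cay_reg he hinv u]
      simp [mul_comm, hΓ]
    rw [Finset.sum_congr rfl fun u _ => this u, ← Finset.mul_sum]
  constructor
  · -- forward direction
    intro h1
    rw [hsdn] at h1
    have hmem : (1 : ℤ) ∈ A := h1 ▸ Int.csInf_mem hne hbdd
    obtain ⟨g, hg1, hg2, hw⟩ := hmem
    have hodd : Odd n := by
      have hmod : (∑ v : G, g v) % 2 = (n : ℤ) % 2 := by
        rw [Finset.sum_int_mod]
        have : ∀ v : G, g v % 2 = 1 := by
          intro v; rcases hg1 v with h | h <;> simp [h]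
        rw [Finset.sum_congr rfl fun v _ => this v]
        simp [hn]
      rw [← hw] at hmod
      rw [← Int.odd_coe_nat, Int.odd_iff]
      omega
    set k := (univ.filter fun v => Γ.Adj v 1).card with hk
    have hkn : (n : ℤ) ≤ 1 + (k : ℤ) := by
      have hlow : (n : ℤ) ≤ ∑ v : G, (g v + ∑ u : G, if Γ.Adj v u then g u else 0) := by
        calc (n : ℤ) = ∑ _v : G, (1 : ℤ) := by simp [hn]
        _ ≤ _ := Finset.sum_le_sum fun v _ => hg2 v
      rw [hsum g, ← hw] at hlow
      linarith
    have hkn' : n - 1 ≤ k := by omega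
    have hfilter : (univ.filter fun v => Γ.Adj v 1) = univ.erase 1 := by
      apply Finset.eq_of_subset_of_card_le
      · intro v hv
        simp only [mem_filter, mem_univ, true_and] at hv
        simp only [mem_erase, mem_univ, and_true]
        exact hv.ne
      · rw [Finset.card_erase_of_mem (mem_univ 1), Finset.card_univ, hn]
        exact hkn'
    have hScomp : S = {(1 : G)}ᶜ := by
      ext x
      simp only [Set.mem_compl_iff, Set.mem_singleton_iff]
      constructor
      · rintro hx rfl; exact he hx
      · intro hx
        have : x ∈ univ.filter fun v => Γ.Adj v 1 := by
          rw [hfilter]; simp [hx]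
        simp only [mem_filter, mem_univ, true_and] at this
        rw [cay_adj he hinv] at this
        simpa using this
    exact ⟨hScomp, hodd⟩
  · -- reverse direction
    rintro ⟨hS, hodd⟩
    have hadj : ∀ a b : G, Γ.Adj a b ↔ a ≠ b := by
      intro a b
      rw [cay_adj he hinv, hS]
      simp [mul_inv_eq_one]
    -- closed neighborhood sum equals total sum
    have hclosed : ∀ (g : G → ℤ) (v : G),
        g v + (∑ u : G, if Γ.Adj v u then g u else 0) = ∑ u : G, g u := by
      intro g v
      have : ∀ u : G, (if Γ.Adj v u then g u else 0) = g u - (if u = v then g u else 0) := by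
        intro u
        rcases eq_or_ne u v with rfl | hu
        · simp [hadj]
        · simp [hadj, hu, Ne.symm hu]
      rw [Finset.sum_congr rfl fun u _ => this u, Finset.sum_sub_distrib,
        Finset.sum_ite_eq' univ v g]
      simp
    obtain ⟨m, hm⟩ := hodd
    have hn1 : 0 < n := by
      rw [← hn]; exact Fintype.card_pos
    let e : G ≃ Fin n := Fintype.equivFinOfCardEq hn
    set g : G → ℤ := fun v => if ((e v : ℕ) < m + 1) then 1 else -1 with hg
    have hgsum : ∑ v : G, g v = 1 := by
      rw [← Equiv.sum_comp e.symm g]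
      have : ∀ i : Fin n, g (e.symm i) = if ((i : ℕ) < m + 1) then 1 else -1 := by
        intro i; simp [hg]
      rw [Finset.sum_congr rfl fun i _ => this i,
        Fin.sum_univ_eq_sum_range (fun j => if j < m + 1 then (1 : ℤ) else -1) n]
      rw [Finset.sum_ite, Finset.sum_const, Finset.sum_const]
      have h1 : (Finset.range n).filter (fun i => i < m + 1) = Finset.range (m + 1) := by
        ext i; simp; omega
      have h2 : ((Finset.range n).filter (fun i => ¬ i < m + 1)).card = m := by
        rw [Finset.filter_not, Finset.card_sdiff_of_subset (Finset.filter_subset _ _), h1]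
        simp; omega
      rw [h1, h2]
      simp
    have hmem : (1 : ℤ) ∈ A := by
      refine ⟨g, fun v => by by_cases h : (e v : ℕ) < m + 1 <;> simp [hg, h] <;> omega, fun v => ?_,
        hgsum.symm⟩
      rw [hclosed g v, hgsum]
      norm_num
    have hlb : ∀ w ∈ A, (1 : ℤ) ≤ w := by
      rintro w ⟨g', hg'1, hg'2, rfl⟩
      have := hg'2 1
      rw [hclosed g' 1] at this
      omega
    rw [hsdn]
    exact le_antisymm (csInf_le hbdd hmem) (le_csInf hne hlb)
end

section
/- Let G be a finite group of even order n generated by a subset S with e ∉ S and S = S⁻¹. If |S| = n − 3, then the signed domination number of the Cayley graph Cay(S:G) equals 4. -/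
theorem stmt_3 {G : Type*} [Group G] [Fintype G] (n : ℕ)
    (hn : Fintype.card G = n) (heven : Even n) (S : Set G)
    (hgen : Subgroup.closure S = ⊤) (he : (1 : G) ∉ S) (hinv : S⁻¹ = S)
    (hcard : S.ncard = n - 3) :
    signedDomNum (cayleyGraph S) = 4 := by
  classical
  obtain ⟨m0, hm0⟩ := heven
  have hn0 : 0 < n := hn ▸ Fintype.card_pos
  -- n ≥ 4
  have hn4 : 4 ≤ n := by
    by_contra h
    push_neg at h
    have hn2 : n = 2 := by omega
    have hS0 : S.ncard = 0 := by rw [hcard, hn2]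
    have hSe : S = ∅ := (Set.ncard_eq_zero (Set.toFinite S)).mp hS0
    rw [hSe, Subgroup.closure_empty] at hgen
    have hall : ∀ g : G, g = 1 := by
      intro g
      have : g ∈ (⊥ : Subgroup G) := hgen ▸ Subgroup.mem_top g
      exact Subgroup.mem_bot.mp this
    have : Fintype.card G ≤ 1 :=
      Fintype.card_le_one_iff.mpr (fun a b => by rw [hall a, hall b])
    omega
  -- the two non-neighbours
  set U : Finset G := S.toFinset with hU
  have hUcard : U.card = n - 3 := by
    rw [← Set.ncard_eq_toFinset_card' S] at *
    exact hcard
  have h1U : (1:G) ∉ U := by simpa [hU] using he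
  have hins : (insert (1:G) U).card = n - 2 := by
    rw [Finset.card_insert_of_notMem h1U, hUcard]; omega
  have hCcard : ((insert (1:G) U)ᶜ : Finset G).card = 2 := by
    rw [Finset.card_compl, hins, hn]; omega
  obtain ⟨t₁, t₂, htne, hC⟩ := Finset.card_eq_two.mp hCcard
  have hCt : ∀ x : G, x ∈ ((insert (1:G) U)ᶜ : Finset G) ↔ (x = t₁ ∨ x = t₂) := by
    intro x; rw [hC]; simp
  have hCt' : ∀ x : G, x ∈ ((insert (1:G) U)ᶜ : Finset G) ↔ ¬(x = 1 ∨ x ∈ S) := by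
    intro x; simp [hU, Set.mem_toFinset]
  have ht₁ : t₁ ≠ 1 ∧ t₁ ∉ S := by
    have := (hCt' t₁).mp ((hCt t₁).mpr (Or.inl rfl))
    push_neg at this; exact this
  have ht₂ : t₂ ≠ 1 ∧ t₂ ∉ S := by
    have := (hCt' t₂).mp ((hCt t₂).mpr (Or.inr rfl))
    push_neg at this; exact this
  have hmem : ∀ x : G, x ∈ S ↔ (x ≠ 1 ∧ x ≠ t₁ ∧ x ≠ t₂) := by
    intro x
    have h12 : ¬(x = 1 ∨ x ∈ S) ↔ (x = t₁ ∨ x = t₂) := (hCt' x).symm.trans (hCt x)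
    constructor
    · intro hxS
      exact ⟨fun h => he (h ▸ hxS), fun h => ht₁.2 (h ▸ hxS), fun h => ht₂.2 (h ▸ hxS)⟩
    · rintro ⟨hx1, hxt₁, hxt₂⟩
      by_contra hxS
      have : x = t₁ ∨ x = t₂ := h12.mp (by tauto)
      tauto
  have hSinv : ∀ x : G, x⁻¹ ∈ S ↔ x ∈ S := by
    intro x
    nth_rewrite 1 [← hinv]
    exact Set.inv_mem_inv
  -- adjacency characterisation
  have hAdj0 : ∀ v u : G, (cayleyGraph S).Adj v u ↔ v * u⁻¹ ∈ S := by
    intro v u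
    simp only [cayleyGraph, SimpleGraph.fromRel_adj]
    constructor
    · rintro ⟨hne, h | h⟩
      · exact h
      · rw [← hSinv (v * u⁻¹)]
        simpa [mul_inv_rev] using h
    · intro h
      refine ⟨?_, Or.inl h⟩
      rintro rfl
      simp only [mul_inv_cancel] at h
      exact he h
  have heq : ∀ (v t u : G), v * u⁻¹ = t ↔ u = t⁻¹ * v := by
    intro v t u
    constructor
    · intro h; rw [← h]; group
    · intro h; rw [h]; group
  have hAdj : ∀ v u : G, (cayleyGraph S).Adj v u ↔
      ¬(u = v ∨ u = t₁⁻¹ * v ∨ u = t₂⁻¹ * v) := by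
    intro v u
    rw [hAdj0 v u, hmem]
    constructor
    · rintro ⟨h1, h2, h3⟩
      push_neg
      refine ⟨?_, fun h => h2 ((heq v t₁ u).mpr h), fun h => h3 ((heq v t₂ u).mpr h)⟩
      intro h
      exact h1 (by rw [h]; group)
    · intro h
      push_neg at h
      obtain ⟨h1, h2, h3⟩ := h
      refine ⟨fun hh => h1 ?_, fun hh => h2 ((heq v t₁ u).mp hh), fun hh => h3 ((heq v t₂ u).mp hh)⟩
      have := (heq v 1 u).mp hh
      simpa using this
  have hne1 : ∀ v : G, v ≠ t₁⁻¹ * v := by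
    intro v h
    exact ht₁.1 (inv_eq_one.mp (mul_eq_right.mp h.symm))
  have hne2 : ∀ v : G, v ≠ t₂⁻¹ * v := by
    intro v h
    exact ht₂.1 (inv_eq_one.mp (mul_eq_right.mp h.symm))
  have hne3 : ∀ v : G, t₁⁻¹ * v ≠ t₂⁻¹ * v := by
    intro v h
    exact htne (inv_injective (mul_right_cancel h))
  -- the key closed-neighbourhood sum identity
  have hkey : ∀ (g : G → ℤ) (v : G),
      g v + ∑ u : G, (if (cayleyGraph S).Adj v u then g u else 0)
        = (∑ u : G, g u) - g (t₁⁻¹ * v) - g (t₂⁻¹ * v) := by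
    intro g v
    have hfil : (Finset.univ.filter fun u => (cayleyGraph S).Adj v u)
        = ({v, t₁⁻¹ * v, t₂⁻¹ * v} : Finset G)ᶜ := by
      ext u
      simp only [Finset.mem_filter, Finset.mem_univ, true_and, Finset.mem_compl,
        Finset.mem_insert, Finset.mem_singleton]
      rw [hAdj v u]
    have hsum : ∑ u : G, (if (cayleyGraph S).Adj v u then g u else 0)
        = ∑ u ∈ ({v, t₁⁻¹ * v, t₂⁻¹ * v} : Finset G)ᶜ, g u := by
      rw [← hfil, Finset.sum_filter]
    rw [hsum]
    have hsum3 : ∑ u ∈ ({v, t₁⁻¹ * v, t₂⁻¹ * v} : Finset G), g u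
        = g v + g (t₁⁻¹ * v) + g (t₂⁻¹ * v) := by
      rw [Finset.sum_insert (by simp [hne1 v, hne2 v]),
        Finset.sum_insert (by simp [hne3 v]), Finset.sum_singleton]
      ring
    have hcompl := Finset.sum_compl_add_sum ({v, t₁⁻¹ * v, t₂⁻¹ * v} : Finset G) g
    rw [hsum3] at hcompl
    linarith
  -- parity of the weight
  have hpar : ∀ g : G → ℤ, (∀ v, g v = 1 ∨ g v = -1) → Even (∑ v : G, g v) := by
    intro g hg
    have h1 := Finset.sum_int_mod (Finset.univ : Finset G) 2 g
    have h2 : ∀ v ∈ (Finset.univ : Finset G), g v % 2 = 1 := by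
      intro v _
      rcases hg v with h | h <;> rw [h] <;> decide
    rw [Finset.sum_congr rfl h2, Finset.sum_const, Finset.card_univ, hn, nsmul_eq_mul, mul_one] at h1
    rw [Int.even_iff]
    omega
  -- lower bound
  have hlb : ∀ w ∈ {w : ℤ | ∃ g : G → ℤ, (∀ v, g v = 1 ∨ g v = -1) ∧
      (∀ v : G, 0 < g v + ∑ u : G, if (cayleyGraph S).Adj v u then g u else 0) ∧
      w = ∑ v : G, g v}, (4:ℤ) ≤ w := by
    rintro w ⟨g, hg, hdom, rfl⟩
    set W := ∑ v : G, g v with hW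
    obtain ⟨m, hm⟩ := hpar g hg
    have hvb : ∀ v : G, g (t₁⁻¹ * v) + g (t₂⁻¹ * v) ≤ W - 2 := by
      intro v
      have h0 := hdom v
      rw [hkey g v] at h0
      rcases hg (t₁⁻¹ * v) with h1 | h1 <;> rcases hg (t₂⁻¹ * v) with h2 | h2 <;> omega
    have hsum1 : ∑ v : G, g (t₁⁻¹ * v) = W :=
      Fintype.sum_equiv (Equiv.mulLeft t₁⁻¹) _ _ (fun v => by simp)
    have hsum2 : ∑ v : G, g (t₂⁻¹ * v) = W :=
      Fintype.sum_equiv (Equiv.mulLeft t₂⁻¹) _ _ (fun v => by simp)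
    have hbig : ∑ v : G, (g (t₁⁻¹ * v) + g (t₂⁻¹ * v)) ≤ ∑ _v : G, (W - 2) :=
      Finset.sum_le_sum (fun v _ => hvb v)
    rw [Finset.sum_add_distrib, hsum1, hsum2, Finset.sum_const, Finset.card_univ, hn,
      nsmul_eq_mul] at hbig
    have hn4' : (4:ℤ) ≤ (n:ℤ) := by exact_mod_cast hn4
    by_contra hcon
    push_neg at hcon
    have hW2 : W ≤ 2 := by omega
    nlinarith [mul_nonneg (by linarith : (0:ℤ) ≤ (n:ℤ) - 4) (by linarith : (0:ℤ) ≤ 2 - W)]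
  -- 4 is attained
  obtain ⟨k, hk⟩ : ∃ k, n = 2 * k + 4 := ⟨m0 - 2, by omega⟩
  have hmem4 : (4:ℤ) ∈ {w : ℤ | ∃ g : G → ℤ, (∀ v, g v = 1 ∨ g v = -1) ∧
      (∀ v : G, 0 < g v + ∑ u : G, if (cayleyGraph S).Adj v u then g u else 0) ∧
      w = ∑ v : G, g v} := by
    obtain ⟨M, hMsub, hMcard⟩ := Finset.exists_subset_card_eq
      (show k ≤ (Finset.univ : Finset G).card by rw [Finset.card_univ, hn]; omega)
    refine ⟨fun v => if v ∈ M then -1 else 1, fun v => by by_cases h : v ∈ M <;> simp [h], ?_, ?_⟩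
    · -- dominating
      have hsumg : ∑ v : G, (if v ∈ M then (-1:ℤ) else 1) = 4 := by
        have h1 : ∑ v ∈ M, (if v ∈ M then (-1:ℤ) else 1) = -(k:ℤ) := by
          rw [Finset.sum_congr rfl (fun v hv => if_pos hv), Finset.sum_const, hMcard]
          simp
        have h2 : ∑ v ∈ Mᶜ, (if v ∈ M then (-1:ℤ) else 1) = ((k:ℤ) + 4) := by
          rw [Finset.sum_congr rfl (fun v hv => if_neg (Finset.mem_compl.mp hv)),
            Finset.sum_const, Finset.card_compl, hMcard, hn]
          have : n - k = k + 4 := by omega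
          rw [this]
          ring
        have h3 := Finset.sum_add_sum_compl M (fun v => if v ∈ M then (-1:ℤ) else 1)
        rw [h1, h2] at h3
        rw [← h3]; ring
      intro v
      rw [hkey (fun v => if v ∈ M then (-1:ℤ) else 1) v]
      simp only [hsumg]
      have h1 : (if t₁⁻¹ * v ∈ M then (-1:ℤ) else 1) ≤ 1 := by split <;> norm_num
      have h2 : (if t₂⁻¹ * v ∈ M then (-1:ℤ) else 1) ≤ 1 := by split <;> norm_num
      linarith
    · -- weight is 4
      have h1 : ∑ v ∈ M, (if v ∈ M then (-1:ℤ) else 1) = -(k:ℤ) := by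
        rw [Finset.sum_congr rfl (fun v hv => if_pos hv), Finset.sum_const, hMcard]
        simp
      have h2 : ∑ v ∈ Mᶜ, (if v ∈ M then (-1:ℤ) else 1) = ((k:ℤ) + 4) := by
        rw [Finset.sum_congr rfl (fun v hv => if_neg (Finset.mem_compl.mp hv)),
          Finset.sum_const, Finset.card_compl, hMcard, hn]
        have : n - k = k + 4 := by omega
        rw [this]
        ring
      have h3 := Finset.sum_add_sum_compl M (fun v => if v ∈ M then (-1:ℤ) else 1)
      rw [h1, h2] at h3
      rw [← h3]; ring
  exact (IsLeast.csInf_eq ⟨hmem4, hlb⟩ : _)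
end

section
/- Let G be a finite group of order n, let a, b, c be three distinct non-identity elements of G, and set S = G \ {e, a, b, c} with S = S⁻¹. Then the subgraph of the Cayley graph Cay(S:G) induced on the vertex set {a, b, c} is isomorphic to the complete graph K₃, or to the path P₃ on three vertices, or to the empty graph on three vertices. -/
lemma iso3 {G : Type*} (Γ : SimpleGraph G) (Δ : SimpleGraph (Fin 3)) (x y z : G)
    (hxy : x ≠ y) (hxz : x ≠ z) (hyz : y ≠ z)
    (h01 : Γ.Adj x y ↔ Δ.Adj 0 1) (h02 : Γ.Adj x z ↔ Δ.Adj 0 2)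
    (h12 : Γ.Adj y z ↔ Δ.Adj 1 2) :
    Nonempty (Γ.induce ({x, y, z} : Set G) ≃g Δ) := by
  classical
  have hx : x ∈ ({x, y, z} : Set G) := by simp
  have hy : y ∈ ({x, y, z} : Set G) := by simp
  have hz : z ∈ ({x, y, z} : Set G) := by simp
  refine ⟨(⟨⟨fun i => ![⟨x, hx⟩, ⟨y, hy⟩, ⟨z, hz⟩] i,
    fun v => if v.1 = x then 0 else if v.1 = y then 1 else 2, ?_, ?_⟩, ?_⟩ :
      Δ ≃g Γ.induce ({x, y, z} : Set G)).symm⟩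
  · intro i
    fin_cases i <;> simp [hxy, hxz, hyz, hxy.symm, hxz.symm, hyz.symm]
  · rintro ⟨v, hv⟩
    rcases hv with rfl | rfl | rfl <;>
      simp [hxy, hxz, hyz, hxy.symm, hxz.symm, hyz.symm]
  · intro i j
    fin_cases i <;> fin_cases j <;>
      simp only [Equiv.coe_fn_mk, Fin.zero_eta, Fin.mk_one, Fin.reduceFinMk, Fin.isValue,
        SimpleGraph.induce, SimpleGraph.comap_adj, Function.Embedding.coe_subtype,
        Matrix.cons_val_zero, Matrix.cons_val_one, Matrix.head_cons, Matrix.cons_val_two,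
        Matrix.tail_cons] <;>
      first
        | exact iff_of_false Γ.irrefl Δ.irrefl
        | exact h01
        | exact h02
        | exact h12
        | (rw [Γ.adj_comm, Δ.adj_comm]; exact h01)
        | (rw [Γ.adj_comm, Δ.adj_comm]; exact h02)
        | (rw [Γ.adj_comm, Δ.adj_comm]; exact h12)

lemma key {G : Type*} [Group G] {x y z : G} (hy : y ≠ 1) (hz : z ≠ 1)
    (hxy : x ≠ y)
    (P1 : x = y*z ∨ x = z*z) (P2 : z = x*x ∨ z = y*x)
    (P3 : y = x*z ∨ y = z*z) (P4 : z = y*y ∨ z = x*y) :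
    x = y*y ∨ x = z*y := by
  rcases P1 with h1 | h1
  · rcases P2 with h2 | h2
    · rw [h2] at h1
      have hy' : y = x * (x*x)⁻¹ := by
        rw [eq_mul_inv_iff_mul_eq]; exact h1.symm
      right; rw [h2, hy']; group
    · rw [h2] at h1
      have hyy : y*y = 1 := by
        apply mul_right_cancel (b := x)
        rw [one_mul, mul_assoc]; exact h1.symm
      rcases P3 with h3 | h3
      · rcases P4 with h4 | h4
        · exact absurd (h4.trans hyy) hz
        · right; rw [h4, mul_assoc, hyy, mul_one]
      · have hx' : x = (z*z)⁻¹ * z := by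
          rw [eq_inv_mul_iff_mul_eq, ← h3]
          exact h2.symm
        have hz4 : (z*z)*(z*z) = 1 := by rw [← h3]; exact hyy
        right
        rw [h3, hx', inv_mul_eq_iff_eq_mul]
        have : (z*z)*(z*(z*z)) = z*((z*z)*(z*z)) := by group
        rw [this, hz4, mul_one]
  · rcases P3 with h3 | h3
    · rw [h1] at h3
      rcases P2 with h2 | h2
      · rw [h1] at h2
        have hzzz : (z*z)*z = 1 := by
          apply mul_right_cancel (b := z)
          rw [one_mul]
          conv_rhs => rw [h2]
          group
        exact absurd (h3.trans hzzz) hy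
      · rw [h3, h1] at h2
        have hz4 : (z*z)*(z*z) = 1 := by
          apply mul_right_cancel (b := z)
          rw [one_mul]
          conv_rhs => rw [h2]
          group
        left
        rw [h3, h1]
        have : ((z*z)*z)*((z*z)*z) = (z*z)*((z*z)*(z*z)) := by group
        rw [this, hz4, mul_one]
    · exact absurd (h1.trans h3.symm) hxy

lemma nonadj {G : Type*} [Group G] {S : Set G} {a b c : G}
    (hS : S = Set.univ \ {1, a, b, c})
    {u v : G} (huv : u ≠ v) (h : ¬ (cayleyGraph S).Adj u v) :
    (u = a*v ∨ u = b*v ∨ u = c*v) ∧ (v = a*u ∨ v = b*u ∨ v = c*u) := by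
  rw [cayleyGraph, SimpleGraph.fromRel_adj] at h
  push_neg at h
  obtain ⟨h1, h2⟩ := h huv
  rw [hS] at h1 h2
  simp only [Set.mem_diff, Set.mem_univ, true_and, not_not, Set.mem_insert_iff,
    Set.mem_singleton_iff] at h1 h2
  constructor
  · rcases h1 with h1 | h1 | h1 | h1
    · exact absurd (mul_inv_eq_one.mp h1) huv
    · exact Or.inl (mul_inv_eq_iff_eq_mul.mp h1)
    · exact Or.inr (Or.inl (mul_inv_eq_iff_eq_mul.mp h1))
    · exact Or.inr (Or.inr (mul_inv_eq_iff_eq_mul.mp h1))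
  · rcases h2 with h2 | h2 | h2 | h2
    · exact absurd (mul_inv_eq_one.mp h2) huv.symm
    · exact Or.inl (mul_inv_eq_iff_eq_mul.mp h2)
    · exact Or.inr (Or.inl (mul_inv_eq_iff_eq_mul.mp h2))
    · exact Or.inr (Or.inr (mul_inv_eq_iff_eq_mul.mp h2))

lemma not_adj_of {G : Type*} [Group G] {S : Set G} {a b c : G}
    (hS : S = Set.univ \ {1, a, b, c}) {u v : G}
    (h1 : u = a*v ∨ u = b*v ∨ u = c*v) (h2 : v = a*u ∨ v = b*u ∨ v = c*u) :
    ¬ (cayleyGraph S).Adj u v := by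
  rw [cayleyGraph, SimpleGraph.fromRel_adj]
  rintro ⟨hne, h | h⟩ <;> rw [hS] at h
  · exact h.2 (by rcases h1 with e|e|e <;> simp [e, mul_inv_cancel_right])
  · exact h.2 (by rcases h2 with e|e|e <;> simp [e, mul_inv_cancel_right])

theorem stmt_5 {G : Type*} [Group G] [Fintype G] (n : ℕ)
    (hn : Fintype.card G = n) (a b c : G)
    (ha : a ≠ 1) (hb : b ≠ 1) (hc : c ≠ 1)
    (hab : a ≠ b) (hac : a ≠ c) (hbc : b ≠ c)
    (S : Set G) (hS : S = Set.univ \ {1, a, b, c}) (hinv : S⁻¹ = S) :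
    Nonempty ((cayleyGraph S).induce ({a, b, c} : Set G) ≃g (⊤ : SimpleGraph (Fin 3))) ∨
    Nonempty ((cayleyGraph S).induce ({a, b, c} : Set G) ≃g SimpleGraph.pathGraph 3) ∨
    Nonempty ((cayleyGraph S).induce ({a, b, c} : Set G) ≃g (⊥ : SimpleGraph (Fin 3))) := by
  classical
  have p01 : (SimpleGraph.pathGraph 3).Adj 0 1 := by
    rw [SimpleGraph.pathGraph_adj]; decide
  have p12 : (SimpleGraph.pathGraph 3).Adj 1 2 := by
    rw [SimpleGraph.pathGraph_adj]; decide
  have p02 : ¬ (SimpleGraph.pathGraph 3).Adj 0 2 := by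
    rw [SimpleGraph.pathGraph_adj]; decide
  have t01 : (⊤ : SimpleGraph (Fin 3)).Adj 0 1 := by simp
  have t02 : (⊤ : SimpleGraph (Fin 3)).Adj 0 2 := by simp
  have t12 : (⊤ : SimpleGraph (Fin 3)).Adj 1 2 := by simp
  by_cases hA : (cayleyGraph S).Adj a b <;>
    by_cases hB : (cayleyGraph S).Adj a c <;>
      by_cases hC : (cayleyGraph S).Adj b c
  · -- K3
    exact Or.inl (iso3 _ _ a b c hab hac hbc
      (iff_of_true hA t01) (iff_of_true hB t02) (iff_of_true hC t12))
  · -- edges ab, ac : path with middle a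
    have hset : ({a, b, c} : Set G) = {b, a, c} := Set.insert_comm a b {c}
    rw [hset]
    exact Or.inr (Or.inl (iso3 _ _ b a c hab.symm hbc hac
      (iff_of_true hA.symm p01) (iff_of_false hC p02) (iff_of_true hB p12)))
  · -- edges ab, bc : path with middle b
    exact Or.inr (Or.inl (iso3 _ _ a b c hab hac hbc
      (iff_of_true hA p01) (iff_of_false hB p02) (iff_of_true hC p12)))
  · -- only edge ab : impossible
    exfalso
    obtain ⟨hB1, hB2⟩ := nonadj hS hac hB
    obtain ⟨hC1, hC2⟩ := nonadj hS hbc hC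
    have P1 : a = b*c ∨ a = c*c := by
      rcases hB1 with h|h|h
      · exact absurd (left_eq_mul.mp h) hc
      · exact Or.inl h
      · exact Or.inr h
    have P2 : c = a*a ∨ c = b*a := by
      rcases hB2 with h|h|h
      · exact Or.inl h
      · exact Or.inr h
      · exact absurd (left_eq_mul.mp h) ha
    have P3 : b = a*c ∨ b = c*c := by
      rcases hC1 with h|h|h
      · exact Or.inl h
      · exact absurd (left_eq_mul.mp h) hc
      · exact Or.inr h
    have P4 : c = b*b ∨ c = a*b := by
      rcases hC2 with h|h|h
      · exact Or.inr h
      · exact Or.inl h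
      · exact absurd (left_eq_mul.mp h) hb
    have key1 : a = b*b ∨ a = c*b := key hb hc hab P1 P2 P3 P4
    have key2 : b = a*a ∨ b = c*a := key ha hc hab.symm P3 P4 P1 P2
    exact not_adj_of hS (Or.inr key1) (Or.imp id Or.inr key2) hA
  · -- edges ac, bc : path with middle c
    have hset : ({a, b, c} : Set G) = {a, c, b} := congrArg (insert a) (Set.pair_comm b c)
    rw [hset]
    exact Or.inr (Or.inl (iso3 _ _ a c b hac hab hbc.symm
      (iff_of_true hB p01) (iff_of_false hA p02) (iff_of_true hC.symm p12)))
  · -- only edge ac : impossible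
    exfalso
    obtain ⟨hA1, hA2⟩ := nonadj hS hab hA
    obtain ⟨hC1, hC2⟩ := nonadj hS hbc hC
    have Q1 : a = b*b ∨ a = c*b := by
      rcases hA1 with h|h|h
      · exact absurd (left_eq_mul.mp h) hb
      · exact Or.inl h
      · exact Or.inr h
    have Q2 : b = a*a ∨ b = c*a := by
      rcases hA2 with h|h|h
      · exact Or.inl h
      · exact absurd (left_eq_mul.mp h) ha
      · exact Or.inr h
    have P3 : b = a*c ∨ b = c*c := by
      rcases hC1 with h|h|h
      · exact Or.inl h
      · exact absurd (left_eq_mul.mp h) hc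
      · exact Or.inr h
    have P4 : c = b*b ∨ c = a*b := by
      rcases hC2 with h|h|h
      · exact Or.inr h
      · exact Or.inl h
      · exact absurd (left_eq_mul.mp h) hb
    have key1 : a = c*c ∨ a = b*c := key hc hb hac Q1.symm Q2 P4.symm P3.symm
    have key2 : c = a*a ∨ c = b*a := key ha hb hac.symm P4.symm P3.symm Q1.symm Q2
    exact not_adj_of hS (Or.inr key1.symm) (Or.imp id Or.inl key2) hB
  · -- only edge bc : impossible
    exfalso
    obtain ⟨hA1, hA2⟩ := nonadj hS hab hA
    obtain ⟨hB1, hB2⟩ := nonadj hS hac hB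
    have Q1 : a = b*b ∨ a = c*b := by
      rcases hA1 with h|h|h
      · exact absurd (left_eq_mul.mp h) hb
      · exact Or.inl h
      · exact Or.inr h
    have Q2 : b = a*a ∨ b = c*a := by
      rcases hA2 with h|h|h
      · exact Or.inl h
      · exact absurd (left_eq_mul.mp h) ha
      · exact Or.inr h
    have P1 : a = b*c ∨ a = c*c := by
      rcases hB1 with h|h|h
      · exact absurd (left_eq_mul.mp h) hc
      · exact Or.inl h
      · exact Or.inr h
    have P2 : c = a*a ∨ c = b*a := by
      rcases hB2 with h|h|h
      · exact Or.inl h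
      · exact Or.inr h
      · exact absurd (left_eq_mul.mp h) ha
    have key1 : b = c*c ∨ b = a*c := key hc ha hbc Q2.symm Q1 P2.symm P1.symm
    have key2 : c = b*b ∨ c = a*b := key hb ha hbc.symm P2.symm P1.symm Q2.symm Q1
    exact not_adj_of hS (Or.imp id Or.inr key1.symm) (Or.imp id Or.inl key2.symm) hC
  · -- empty
    exact Or.inr (Or.inr (iso3 _ _ a b c hab hac hbc
      (iff_of_false hA (by simp)) (iff_of_false hB (by simp)) (iff_of_false hC (by simp))))
end

section
/- Let G be a finite group of order n generated by a nonempty subset S with e ∉ S and S = S⁻¹. Then the signed domination number of the Cayley graph Cay(S:G) equals n if and only if G is isomorphic to the cyclic group ℤ₂ of order 2. -/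
open Finset in
theorem stmt_7 {G : Type*} [Group G] [Fintype G] (n : ℕ)
    (hn : Fintype.card G = n) (S : Set G) (hne : S.Nonempty)
    (hgen : Subgroup.closure S = ⊤) (he : (1 : G) ∉ S) (hinv : S⁻¹ = S) :
    signedDomNum (cayleyGraph S) = (n : ℤ) ↔
      Nonempty (G ≃* Multiplicative (ZMod 2)) := by
  classical
  set W : Set ℤ := {w : ℤ | ∃ g : G → ℤ, (∀ v, g v = 1 ∨ g v = -1) ∧
    (∀ v : G, 0 < g v + ∑ u : G, if (cayleyGraph S).Adj v u then g u else 0) ∧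
    w = ∑ v : G, g v} with hW
  have hWdef : signedDomNum (cayleyGraph S) = sInf W := by
    rw [signedDomNum, hW]
  have hbdd : BddBelow W := by
    refine ⟨-(n : ℤ), ?_⟩
    rintro w ⟨g, hg, -, rfl⟩
    have : ∀ v : G, (-1 : ℤ) ≤ g v := fun v => by rcases hg v with h | h <;> omega
    calc (-(n : ℤ)) = ∑ _v : G, (-1 : ℤ) := by simp [hn]
      _ ≤ ∑ v : G, g v := Finset.sum_le_sum (fun v _ => this v)
  have hmemn : (n : ℤ) ∈ W := by
    refine ⟨fun _ => 1, fun v => Or.inl rfl, fun v => ?_, by simp [hn]⟩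
    show (0:ℤ) < 1 + ∑ u : G, if (cayleyGraph S).Adj v u then (1 : ℤ) else 0
    have : (0 : ℤ) ≤ ∑ u : G, if (cayleyGraph S).Adj v u then (1 : ℤ) else 0 :=
      Finset.sum_nonneg (fun u _ => by positivity)
    omega
  -- adjacency characterization
  have hadj : ∀ v u : G, (cayleyGraph S).Adj v u ↔ v ≠ u ∧ u * v⁻¹ ∈ S := by
    intro v u
    rw [cayleyGraph, SimpleGraph.fromRel_adj]
    constructor
    · rintro ⟨hne', h | h⟩
      · refine ⟨hne', ?_⟩
        have : (v * u⁻¹)⁻¹ ∈ S⁻¹ := by simpa using h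
        rw [hinv] at this; simpa using this
      · exact ⟨hne', h⟩
    · rintro ⟨hne', h⟩; exact ⟨hne', Or.inr h⟩
  rw [hWdef]
  by_cases hsing : ∃ x, S = {x}
  · -- singleton connection set: G ≅ ℤ₂ and signed domination number is n
    obtain ⟨x, rfl⟩ := hsing
    have hxS : x ∈ ({x} : Set G) := rfl
    have hx1 : x ≠ 1 := fun h => he (h ▸ hxS)
    have hxinv : x⁻¹ = x := by
      have := Set.inv_singleton x ▸ hinv
      exact (Set.singleton_eq_singleton_iff.1 this)
    have hx2 : x ^ 2 = 1 := by
      rw [pow_two]; nth_rewrite 2 [← hxinv]; exact mul_inv_cancel x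
    haveI : Fact (Nat.Prime 2) := ⟨Nat.prime_two⟩
    have hord : orderOf x = 2 := orderOf_eq_prime hx2 hx1
    have hzp : ∀ y : G, y ∈ Subgroup.zpowers x := by
      intro y
      rw [Subgroup.zpowers_eq_closure, hgen]; trivial
    have hcard2 : Fintype.card G = 2 := by
      rw [← Nat.card_eq_fintype_card, ← orderOf_eq_card_of_forall_mem_zpowers hzp, hord]
    have hiso : Nonempty (G ≃* Multiplicative (ZMod 2)) := by
      refine ⟨mulEquivOfPrimeCardEq (p := 2) ?_ ?_⟩
      · rw [Nat.card_eq_fintype_card, hcard2]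
      · rw [Nat.card_eq_fintype_card]; rfl
    -- adjacency: unique neighbor x * v
    have hadj2 : ∀ v u : G, (cayleyGraph {x}).Adj v u ↔ u = x * v := by
      intro v u
      rw [hadj v u]
      constructor
      · rintro ⟨-, h⟩
        rw [Set.mem_singleton_iff] at h
        rw [← h]; group
      · rintro rfl
        refine ⟨?_, by simp⟩
        intro hh
        exact hx1 (right_eq_mul.1 hh)
    have hall : ∀ w ∈ W, w = (n : ℤ) := by
      rintro w ⟨g, hg, hpos, rfl⟩
      have hone : ∀ v, g v = 1 := by
        intro v
        have h := hpos v
        have hs : ∑ u : G, (if (cayleyGraph {x}).Adj v u then g u else 0) = g (x * v) := by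
          simp only [hadj2]
          rw [Finset.sum_ite_eq' Finset.univ (x * v) g]
          simp
        rw [hs] at h
        rcases hg v with h1 | h1
        · exact h1
        · rcases hg (x * v) with h2 | h2 <;> omega
      rw [Finset.sum_congr rfl (fun v _ => hone v)]
      simp [hn]
    refine iff_of_true ?_ hiso
    exact le_antisymm (csInf_le hbdd hmemn)
      (le_csInf ⟨_, hmemn⟩ (fun w hw => (hall w hw).ge))
  · -- S has two distinct elements
    obtain ⟨a, ha⟩ := hne
    have hex : ∃ b ∈ S, b ≠ a := by
      by_contra h
      push_neg at h
      exact hsing ⟨a, Set.eq_singleton_iff_unique_mem.mpr ⟨ha, h⟩⟩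
    obtain ⟨b, hb, hba⟩ := hex
    have ha1 : a ≠ 1 := fun h => he (h ▸ ha)
    have hb1 : b ≠ 1 := fun h => he (h ▸ hb)
    set g : G → ℤ := fun v => if v = 1 then -1 else 1 with hgdef
    have hgval : ∀ v, g v = 1 ∨ g v = -1 := by
      intro v; by_cases h : v = 1 <;> simp [hgdef, h]
    have hgform : ∀ v, g v = 1 - (if v = 1 then 2 else 0) := by
      intro v; by_cases h : v = 1 <;> simp [hgdef, h]
    have hkey : ∀ v : G, ∃ N : Finset G, 2 ≤ N.card ∧
        (∑ u : G, if (cayleyGraph S).Adj v u then g u else 0)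
          = (N.card : ℤ) - (if (1:G) ∈ N then 2 else 0) ∧
        ((1:G) ∈ N ↔ (cayleyGraph S).Adj v 1) := by
      intro v
      refine ⟨Finset.univ.filter (fun u => (cayleyGraph S).Adj v u), ?_, ?_, ?_⟩
      · have hsub : ({a * v, b * v} : Finset G) ⊆
            Finset.univ.filter (fun u => (cayleyGraph S).Adj v u) := by
          intro u hu
          rw [Finset.mem_insert, Finset.mem_singleton] at hu
          rw [Finset.mem_filter]
          refine ⟨Finset.mem_univ u, ?_⟩
          rcases hu with rfl | rfl
          · rw [hadj]
            exact ⟨fun h => ha1 (right_eq_mul.1 h), by simpa using ha⟩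
          · rw [hadj]
            exact ⟨fun h => hb1 (right_eq_mul.1 h), by simpa using hb⟩
        calc 2 = ({a * v, b * v} : Finset G).card := by
              rw [Finset.card_pair (fun h => hba (mul_right_cancel h).symm)]
          _ ≤ _ := Finset.card_le_card hsub
      · rw [← Finset.sum_filter]
        rw [Finset.sum_congr rfl (fun u _ => hgform u), Finset.sum_sub_distrib]
        rw [Finset.sum_ite_eq' _ (1:G) (fun _ => (2:ℤ))]
        simp
      · simp
    have hpos : ∀ v : G, 0 < g v + ∑ u : G, if (cayleyGraph S).Adj v u then g u else 0 := by
      intro v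
      obtain ⟨N, hN2, hNsum, hNmem⟩ := hkey v
      rw [hNsum]
      have hN2' : (2 : ℤ) ≤ (N.card : ℤ) := by exact_mod_cast hN2
      by_cases hv : v = 1
      · have h1N : (1:G) ∉ N := by
          rw [hNmem, hv]
          exact (cayleyGraph S).irrefl
        rw [if_neg h1N]
        have : g v = -1 := by simp [hgdef, hv]
        omega
      · have : g v = 1 := by simp [hgdef, hv]
        split_ifs <;> omega
    have hwt : ∑ v : G, g v = (n : ℤ) - 2 := by
      rw [Finset.sum_congr rfl (fun v _ => hgform v), Finset.sum_sub_distrib]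
      rw [Finset.sum_ite_eq' _ (1:G) (fun _ => (2:ℤ))]
      simp [hn]
    have hmem2 : ((n : ℤ) - 2) ∈ W := ⟨g, hgval, hpos, hwt.symm⟩
    have hle : sInf W ≤ (n : ℤ) - 2 := csInf_le hbdd hmem2
    refine iff_of_false (fun h => by omega) ?_
    rintro ⟨e⟩
    have hcard2 : Fintype.card G = 2 := by
      rw [Fintype.card_congr e.toEquiv]; rfl
    have h3 : 3 ≤ Fintype.card G := by
      have hle3 : ({1, a, b} : Finset G).card ≤ Fintype.card G := Finset.card_le_univ _
      have hc : ({1, a, b} : Finset G).card = 3 := by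
        rw [Finset.card_insert_of_notMem (by simp [Ne.symm ha1, Ne.symm hb1]),
          Finset.card_pair (Ne.symm hba)]
      omega
    omega
end

section
/- Let G be a finite group of order n generated by a subset S with e ∉ S, S = S⁻¹ and |S| = 2. Then the signed domination number of the Cayley graph Cay(S:G) equals n − 4 if and only if G is isomorphic to one of the following groups: ℤ₆, ℤ₇, ℤ₈, the symmetric group S₃, or the dihedral group of order 8. -/
lemma cayley_adj {G : Type*} [Group G] (S : Set G) (he : (1 : G) ∉ S) (hinv : S⁻¹ = S)
    (a b : G) : (cayleyGraph S).Adj a b ↔ a * b⁻¹ ∈ S := by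
  unfold cayleyGraph
  rw [SimpleGraph.fromRel_adj]
  constructor
  · rintro ⟨hne, h | h⟩
    · exact h
    · rw [← hinv, Set.mem_inv]
      simpa [mul_inv_rev] using h
  · intro h
    refine ⟨?_, Or.inl h⟩
    rintro rfl
    simp only [mul_inv_cancel] at h
    exact he h

lemma cyclic_iso {G : Type*} [Group G] (hc : IsCyclic G) {k : ℕ} (h : Nat.card G = k) :
    Nonempty (G ≃* Multiplicative (ZMod k)) := by
  subst h
  exact ⟨(zmodCyclicMulEquiv hc).symm⟩

def d3toS3 : DihedralGroup 3 → Equiv.Perm (Fin 3)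
  | .r i => (finRotate 3) ^ i.val
  | .sr i => Equiv.swap 0 1 * (finRotate 3) ^ i.val

lemma d3toS3_mul : ∀ x y : DihedralGroup 3, d3toS3 (x * y) = d3toS3 x * d3toS3 y := by decide
lemma d3toS3_bij : Function.Bijective d3toS3 := by decide

noncomputable def d3S3 : DihedralGroup 3 ≃* Equiv.Perm (Fin 3) :=
  MulEquiv.ofBijective (MonoidHom.mk' d3toS3 d3toS3_mul) d3toS3_bij

section Cycle

variable {n : ℕ} {V : Type*} [Fintype V]

open Classical in
lemma nbhd_sum (hn : 3 ≤ n) (Γ : SimpleGraph V) (f : ZMod n → V) (hf : Function.Bijective f)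
    (hadj : ∀ i j : ZMod n, Γ.Adj (f i) (f j) ↔ (j = i + 1 ∨ j = i - 1))
    (g : V → ℤ) (i : ZMod n) :
    g (f i) + ∑ u : V, (if Γ.Adj (f i) u then g u else 0)
      = g (f i) + g (f (i + 1)) + g (f (i - 1)) := by
  have : NeZero n := ⟨by omega⟩
  have hne : i + 1 ≠ i - 1 := by
    intro h
    have h2 : (2 : ZMod n) = 0 := by linear_combination h
    have h2' : ((2 : ℕ) : ZMod n) = 0 := by exact_mod_cast h2
    rw [ZMod.natCast_eq_zero_iff] at h2'
    have := Nat.le_of_dvd (by norm_num) h2'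
    omega
  have hsum : (∑ u : V, (if Γ.Adj (f i) u then g u else 0))
      = ∑ j : ZMod n, (if Γ.Adj (f i) (f j) then g (f j) else 0) :=
    (Fintype.sum_bijective f hf _ _ (fun j => rfl)).symm
  rw [hsum]
  have step : ∀ j : ZMod n, (if Γ.Adj (f i) (f j) then g (f j) else 0)
      = (if j ∈ ({i + 1, i - 1} : Finset (ZMod n)) then g (f j) else 0) := by
    intro j
    by_cases h : Γ.Adj (f i) (f j)
    · rw [if_pos h, if_pos (by rcases (hadj i j).mp h with h' | h' <;> simp [h'])]
    · rw [if_neg h, if_neg (by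
        intro hj
        apply h
        rw [hadj]
        rcases Finset.mem_insert.mp hj with h' | h'
        · exact Or.inl h'
        · exact Or.inr (Finset.mem_singleton.mp h'))]
  rw [Finset.sum_congr rfl (fun j _ => step j), Finset.sum_ite_mem, Finset.univ_inter,
    Finset.sum_pair hne]
  ring

lemma key_sep (hn : 3 ≤ n) : ∀ a b : ZMod n,
    (a = b + 1 ∨ a = b + 2) → ¬((a.val % 3 = 0 ∧ a.val < 3 * (n / 3)) ∧
      (b.val % 3 = 0 ∧ b.val < 3 * (n / 3))) := by
  have : NeZero n := ⟨by omega⟩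
  rintro a b hab ⟨⟨ha1, ha2⟩, ⟨hb1, hb2⟩⟩
  have h1 : (1 : ZMod n).val = 1 := by
    have : Fact (1 < n) := ⟨by omega⟩
    exact ZMod.val_one n
  have h2v : (2 : ZMod n).val = 2 := by
    have h := ZMod.val_cast_of_lt (show 2 < n by omega)
    simpa using h
  have hav : a.val < n := ZMod.val_lt a
  have hbv : b.val < n := ZMod.val_lt b
  rcases hab with h | h
  · have hval := congrArg ZMod.val h
    rw [ZMod.val_add, h1] at hval
    rcases (show b.val + 1 < n ∨ b.val + 1 = n by omega) with h' | h'
    · rw [Nat.mod_eq_of_lt h'] at hval; omega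
    · rw [h', Nat.mod_self] at hval; omega
  · have hval := congrArg ZMod.val h
    rw [ZMod.val_add, h2v] at hval
    rcases (show b.val + 2 < n ∨ b.val + 2 = n ∨ b.val + 2 = n + 1 by omega) with h' | h' | h'
    · rw [Nat.mod_eq_of_lt h'] at hval; omega
    · rw [h', Nat.mod_self] at hval; omega
    · rw [h', Nat.add_mod_left, Nat.mod_eq_of_lt (by omega)] at hval; omega

end Cycle

section Main
variable {n : ℕ} {V : Type*} [Fintype V]

open Classical in
lemma signedDomNum_cycle (hn : 3 ≤ n) (Γ : SimpleGraph V) (hcard : Fintype.card V = n)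
    (f : ZMod n → V) (hf : Function.Bijective f)
    (hadj : ∀ i j : ZMod n, Γ.Adj (f i) (f j) ↔ (j = i + 1 ∨ j = i - 1)) :
    signedDomNum Γ = (n : ℤ) - 2 * ((n / 3 : ℕ) : ℤ) := by
  have hnz : NeZero n := ⟨by omega⟩
  set k := n / 3 with hk
  set P : ZMod n → Prop := fun i => i.val % 3 = 0 ∧ i.val < 3 * k with hP
  have h3k : 3 * k ≤ n := by omega
  have hfilter : (Finset.univ.filter P).card = k := by
    have himg : Finset.univ.filter P
        = (Finset.range k).image (fun j => ((3 * j : ℕ) : ZMod n)) := by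
      ext i
      simp only [Finset.mem_filter, Finset.mem_univ, true_and, Finset.mem_image,
        Finset.mem_range, hP]
      constructor
      · rintro ⟨h1, h2⟩
        refine ⟨i.val / 3, by omega, ?_⟩
        have : 3 * (i.val / 3) = i.val := by omega
        rw [this]
        exact ZMod.natCast_rightInverse i
      · rintro ⟨j, hj, rfl⟩
        rw [ZMod.val_cast_of_lt (by omega)]
        omega
    rw [himg, Finset.card_image_of_injOn, Finset.card_range]
    intro j1 h1 j2 h2 he
    simp only [Finset.mem_coe, Finset.mem_range] at h1 h2
    have := congrArg ZMod.val he
    rw [ZMod.val_cast_of_lt (by omega), ZMod.val_cast_of_lt (by omega)] at this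
    omega
  apply IsLeast.csInf_eq
  constructor
  · -- membership: the explicit signed dominating function
    set e := Equiv.ofBijective f hf with he
    have hsymm : ∀ j : ZMod n, e.symm (f j) = j := fun j => e.symm_apply_eq.mpr rfl
    set g0 : V → ℤ := fun v => if P (e.symm v) then -1 else 1 with hg0
    have hval : ∀ j : ZMod n, g0 (f j) = if P j then -1 else 1 := by
      intro j; rw [hg0]; simp only [hsymm]
    refine ⟨g0, fun v => by
      by_cases h : P (e.symm v)
      · exact Or.inr (if_pos h)
      · exact Or.inl (if_neg h), ?_, ?_⟩
    · intro v
      obtain ⟨i, rfl⟩ := hf.surjective v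
      rw [nbhd_sum hn Γ f hf hadj g0 i]
      rw [hval, hval, hval]
      have k1 : ¬(P (i + 1) ∧ P i) := by
        simpa only [hP] using key_sep hn (i + 1) i (Or.inl rfl)
      have k2 : ¬(P i ∧ P (i - 1)) := by
        simpa only [hP] using key_sep hn i (i - 1) (Or.inl (by ring))
      have k3 : ¬(P (i + 1) ∧ P (i - 1)) := by
        simpa only [hP] using key_sep hn (i + 1) (i - 1) (Or.inr (by ring))
      split_ifs <;>
        first
          | exact absurd ⟨‹P (i + 1)›, ‹P i›⟩ k1
          | exact absurd ⟨‹P i›, ‹P (i - 1)›⟩ k2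
          | exact absurd ⟨‹P (i + 1)›, ‹P (i - 1)›⟩ k3
          | norm_num
    · -- weight computation
      have hsum : (∑ v : V, g0 v) = ∑ i : ZMod n, (if P i then (-1 : ℤ) else 1) :=
        (Fintype.sum_bijective f hf _ _ (fun j => (hval j).symm)).symm
      rw [hsum, Finset.sum_ite, Finset.sum_const, Finset.sum_const, hfilter]
      have hnc : (Finset.univ.filter (fun i => ¬ P i)).card = n - k := by
        have := Finset.card_filter_add_card_filter_not (s := Finset.univ) (p := P)
        rw [hfilter] at this
        rw [Finset.card_univ, ZMod.card n] at this
        omega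
      rw [hnc]
      simp only [nsmul_eq_mul, smul_eq_mul]
      omega
  · -- lower bound
    rintro w ⟨g, hg1, hg2, rfl⟩
    set W := ∑ v : V, g v with hW
    have hWh : W = ∑ i : ZMod n, g (f i) := (Fintype.sum_bijective f hf _ g (fun j => rfl)).symm
    have hs1 : ∑ i : ZMod n, g (f (i + 1)) = W := by
      rw [hWh]
      exact Fintype.sum_equiv (Equiv.addRight (1 : ZMod n)) _ _ (fun i => rfl)
    have hs2 : ∑ i : ZMod n, g (f (i - 1)) = W := by
      rw [hWh]
      exact Fintype.sum_equiv (Equiv.subRight (1 : ZMod n)) _ _ (fun i => rfl)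
    have hlow : (n : ℤ) ≤ 3 * W := by
      have hbig : ∀ i : ZMod n, 1 ≤ g (f i) + g (f (i + 1)) + g (f (i - 1)) := by
        intro i
        have := hg2 (f i)
        rw [nbhd_sum hn Γ f hf hadj g i] at this
        omega
      calc (n : ℤ) = ∑ _i : ZMod n, (1 : ℤ) := by
            rw [Finset.sum_const, Finset.card_univ, ZMod.card n]; simp
        _ ≤ ∑ i : ZMod n, (g (f i) + g (f (i + 1)) + g (f (i - 1))) :=
            Finset.sum_le_sum (fun i _ => hbig i)
        _ = 3 * W := by
            rw [Finset.sum_add_distrib, Finset.sum_add_distrib, ← hWh, hs1, hs2]; ring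
    have hpar : W % 2 = (n : ℤ) % 2 := by
      rw [hW, Finset.sum_int_mod]
      have hone : ∀ v : V, g v % 2 = 1 := by
        intro v; rcases hg1 v with h | h <;> rw [h] <;> decide
      rw [Finset.sum_congr rfl (fun v _ => hone v), Finset.sum_const, Finset.card_univ, hcard]
      simp
    omega
end Main

lemma zmod_eq_add_iff {n : ℕ} [NeZero n] (i j : ZMod n) (c : ℤ) :
    j = i + (c : ZMod n) ↔ (n : ℤ) ∣ ((i.val : ℤ) + c - (j.val : ℤ)) := by
  have h1 : ((j.val : ℤ) : ZMod n) = j := by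
    push_cast
    exact ZMod.natCast_rightInverse j
  have h2 : (((i.val : ℤ) + c : ℤ) : ZMod n) = i + (c : ZMod n) := by
    push_cast
    rw [ZMod.natCast_rightInverse i]
  constructor
  · intro h
    have : ((j.val : ℤ) : ZMod n) = (((i.val : ℤ) + c : ℤ) : ZMod n) := by rw [h1, h2, h]
    exact Int.modEq_iff_dvd.mp ((ZMod.intCast_eq_intCast_iff _ _ _).mp this)
  · intro h
    have : ((j.val : ℤ) : ZMod n) = (((i.val : ℤ) + c : ℤ) : ZMod n) :=
      (ZMod.intCast_eq_intCast_iff _ _ _).mpr (Int.modEq_iff_dvd.mpr h)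
    rw [h1, h2] at this
    exact this

section CaseA
variable {G : Type*} [Group G] [Fintype G]

lemma caseA (n : ℕ) (hn : Fintype.card G = n) (s : G) (hs1 : s ≠ 1) (hs2 : s * s ≠ 1)
    (hgen : ∀ x : G, x ∈ Subgroup.zpowers s) :
    3 ≤ n ∧ IsCyclic G ∧
    ∃ f : ZMod n → G, Function.Bijective f ∧
      ∀ i j, f i * (f j)⁻¹ ∈ ({s, s⁻¹} : Set G) ↔ (j = i + 1 ∨ j = i - 1) := by
  have hord : orderOf s = n := by
    rw [orderOf_eq_card_of_forall_mem_zpowers hgen, Nat.card_eq_fintype_card, hn]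
  have hpos : 0 < orderOf s := orderOf_pos s
  have h3 : 3 ≤ n := by
    have h1 : orderOf s ≠ 1 := fun hh => hs1 (orderOf_eq_one_iff.mp hh)
    by_contra hcon
    have h2eq : orderOf s = 2 := by omega
    have hp := pow_orderOf_eq_one s
    rw [h2eq, pow_two] at hp
    exact hs2 hp
  have : NeZero n := ⟨by omega⟩
  have hcyc : IsCyclic G := ⟨⟨s, hgen⟩⟩
  refine ⟨h3, hcyc, fun i => s ^ i.val, ?_, ?_⟩
  · rw [Fintype.bijective_iff_injective_and_card]
    refine ⟨fun i j hij => ?_, by rw [ZMod.card, hn]⟩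
    have := pow_injOn_Iio_orderOf (x := s)
      (by rw [Set.mem_Iio, hord]; exact i.val_lt) (by rw [Set.mem_Iio, hord]; exact j.val_lt) hij
    exact ZMod.val_injective n this
  · intro i j
    have hexp : s ^ i.val * (s ^ j.val)⁻¹ = s ^ ((i.val : ℤ) - (j.val : ℤ)) := by
      rw [zpow_sub, zpow_natCast, zpow_natCast]
    have hmain : ∀ c : ℤ, s ^ ((i.val : ℤ) - (j.val : ℤ)) = s ^ (-c) ↔ j = i + (c : ZMod n) := by
      intro c
      rw [zpow_eq_zpow_iff_modEq, hord, Int.modEq_iff_dvd, zmod_eq_add_iff,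
        show (-c - ((i.val : ℤ) - (j.val : ℤ))) = -(((i.val : ℤ) + c - (j.val : ℤ))) by ring,
        dvd_neg]
    rw [hexp, Set.mem_insert_iff, Set.mem_singleton_iff]
    constructor
    · rintro (h | h)
      · right
        have := (hmain (-1)).mp (by rw [h]; norm_num)
        simpa [sub_eq_add_neg] using this
      · left
        have := (hmain 1).mp (by rw [h]; norm_num)
        simpa using this
    · rintro (h | h)
      · right
        have : j = i + ((1 : ℤ) : ZMod n) := by simpa using h
        have := (hmain 1).mpr this
        rw [this]
        norm_num
      · left
        have : j = i + ((-1 : ℤ) : ZMod n) := by simpa [sub_eq_add_neg] using h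
        have := (hmain (-1)).mpr this
        rw [this]
        norm_num
end CaseA

section CaseB
variable {G : Type*} [Group G] [Fintype G]

lemma caseB (s t : G) (hs : s * s = 1) (ht : t * t = 1) (hs1 : s ≠ 1) (ht1 : t ≠ 1) (hst : s ≠ t)
    (hgen : Subgroup.closure ({s, t} : Set G) = ⊤) :
    ∃ m : ℕ, 2 ≤ m ∧ Fintype.card G = 2 * m ∧ Nonempty (G ≃* DihedralGroup m) ∧
    ∃ f : ZMod (2 * m) → G, Function.Bijective f ∧
      ∀ i j, f i * (f j)⁻¹ ∈ ({s, t} : Set G) ↔ (j = i + 1 ∨ j = i - 1) := by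
  classical
  have sinv : s⁻¹ = s := inv_eq_of_mul_eq_one_right hs
  have tinv : t⁻¹ = t := inv_eq_of_mul_eq_one_right ht
  set r : G := t * s with hr
  have hrinv : r⁻¹ = s * t := by rw [hr, mul_inv_rev, sinv, tinv]
  have hconj1 : s * r * s⁻¹ = r⁻¹ := by
    rw [hrinv, sinv, hr]
    calc s * (t * s) * s = s * t * (s * s) := by group
    _ = s * t := by rw [hs, mul_one]
  have hconj : ∀ c : ℤ, s * r ^ c * s = r ^ (-c) := by
    intro c
    have := conj_zpow (i := c) (a := s) (b := r)
    rw [hconj1] at this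
    rw [inv_zpow'] at this
    rw [sinv] at this
    exact this.symm
  have hcomm : ∀ c : ℤ, r ^ c * s = s * r ^ (-c) := by
    intro c
    rw [← hconj c, ← mul_assoc, ← mul_assoc, hs, one_mul]
  have hr1 : r ≠ 1 := by
    intro h
    have : t = s⁻¹ := eq_inv_of_mul_eq_one_left h
    rw [sinv] at this
    exact hst this.symm
  set m : ℕ := orderOf r with hm
  have hmpos : 0 < m := orderOf_pos r
  have hm1 : m ≠ 1 := fun hh => hr1 (orderOf_eq_one_iff.mp hh)
  have hm2 : 2 ≤ m := by omega
  have ht' : t = s * r ^ (-1 : ℤ) := by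
    rw [zpow_neg_one, hrinv, ← mul_assoc, hs, one_mul]
  have hts : t = s * r⁻¹ := by rw [ht', zpow_neg_one]
  have hcard3 : 3 ≤ Fintype.card G := by
    have hsub : ({1, s, t} : Finset G) ⊆ Finset.univ := Finset.subset_univ _
    have hc : ({1, s, t} : Finset G).card = 3 := by
      rw [Finset.card_insert_of_notMem (by simp [Ne.symm hs1, Ne.symm ht1]),
        Finset.card_insert_of_notMem (by simp [hst]), Finset.card_singleton]
    calc 3 = ({1, s, t} : Finset G).card := hc.symm
    _ ≤ Finset.univ.card := Finset.card_le_card hsub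
    _ = Fintype.card G := rfl
  have hsnot : s ∉ Subgroup.zpowers r := by
    intro hmem
    obtain ⟨c, hc⟩ := Subgroup.mem_zpowers_iff.mp hmem
    have htmem : t ∈ Subgroup.zpowers r := by
      rw [hts, ← hc, ← zpow_neg_one, ← zpow_add]
      exact Subgroup.mem_zpowers_iff.mpr ⟨c + (-1), rfl⟩
    have hsmem : s ∈ Subgroup.zpowers r := hmem
    have hall : ∀ x : G, x ∈ Subgroup.zpowers r := by
      intro x
      have : Subgroup.closure ({s, t} : Set G) ≤ Subgroup.zpowers r := by
        apply Subgroup.closure_le _ |>.mpr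
        rintro x (rfl | rfl)
        · exact hsmem
        · exact htmem
      rw [hgen] at this
      exact this (Subgroup.mem_top x)
    have hcomm_st : s * t = t * s := by
      obtain ⟨a, ha2⟩ := Subgroup.mem_zpowers_iff.mp hsmem
      obtain ⟨b, hb⟩ := Subgroup.mem_zpowers_iff.mp htmem
      rw [← ha2, ← hb, ← zpow_add, ← zpow_add, add_comm]
    have hr2 : r * r = 1 := by
      rw [hr]
      calc t * s * (t * s) = t * (s * t) * s := by group
      _ = t * (t * s) * s := by rw [hcomm_st]
      _ = (t * t) * (s * s) := by group
      _ = 1 := by rw [hs, ht, mul_one]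
    have hdvd : m ∣ 2 := orderOf_dvd_of_pow_eq_one (by rw [pow_two]; exact hr2)
    have hmcard : m = Fintype.card G := by
      rw [hm, orderOf_eq_card_of_forall_mem_zpowers hall, Nat.card_eq_fintype_card]
    have := Nat.le_of_dvd (by norm_num) hdvd
    omega
  have htnot : t ∉ Subgroup.zpowers r := by
    intro hmem
    apply hsnot
    have : s = t * r := by rw [hts]; group
    rw [this]
    obtain ⟨c, hc⟩ := Subgroup.mem_zpowers_iff.mp hmem
    rw [← hc]
    exact Subgroup.mem_zpowers_iff.mpr ⟨c + 1, by rw [zpow_add_one]⟩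
  -- every element is r^c or s*r^c
  have hK : ∀ x : G, ∃ c : ℤ, x = r ^ c ∨ x = s * r ^ c := by
    set K : Subgroup G :=
      { carrier := {x | ∃ c : ℤ, x = r ^ c ∨ x = s * r ^ c}
        one_mem' := ⟨0, Or.inl (zpow_zero r).symm⟩
        mul_mem' := by
          rintro x y ⟨a, rfl | rfl⟩ ⟨b, rfl | rfl⟩
          · exact ⟨a + b, Or.inl (by rw [zpow_add])⟩
          · refine ⟨-a + b, Or.inr ?_⟩
            rw [← mul_assoc, hcomm a, mul_assoc, ← zpow_add]
          · exact ⟨a + b, Or.inr (by rw [mul_assoc, zpow_add])⟩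
          · refine ⟨-a + b, Or.inl ?_⟩
            calc s * r ^ a * (s * r ^ b) = (s * r ^ a * s) * r ^ b := by group
            _ = r ^ (-a) * r ^ b := by rw [hconj a]
            _ = r ^ (-a + b) := by rw [zpow_add]
        inv_mem' := by
          rintro x ⟨a, rfl | rfl⟩
          · exact ⟨-a, Or.inl (by rw [zpow_neg])⟩
          · refine ⟨a, Or.inr ?_⟩
            rw [mul_inv_rev, sinv, ← zpow_neg]
            rw [hcomm (-a), neg_neg] } with hKdef
    have hKtop : K = ⊤ := by
      rw [eq_top_iff, ← hgen]
      apply Subgroup.closure_le _ |>.mpr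
      rintro x (rfl | rfl)
      · exact ⟨0, Or.inr (by rw [zpow_zero, mul_one])⟩
      · exact ⟨-1, Or.inr ht'⟩
    intro x
    have : x ∈ K := by rw [hKtop]; exact Subgroup.mem_top x
    exact this
  have hne2m : NeZero (2 * m) := ⟨by omega⟩
  -- the cycle enumeration
  set f : ZMod (2 * m) → G :=
    fun i => if i.val % 2 = 0 then r ^ (i.val / 2) else s * r ^ (i.val / 2) with hf
  have hfeven : ∀ i : ZMod (2 * m), i.val % 2 = 0 → f i = r ^ ((i.val / 2 : ℕ) : ℤ) := by
    intro i h
    simp only [hf, if_pos h, zpow_natCast]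
  have hfodd : ∀ i : ZMod (2 * m), i.val % 2 ≠ 0 → f i = s * r ^ ((i.val / 2 : ℕ) : ℤ) := by
    intro i h
    simp only [hf, if_neg h, zpow_natCast]
  have hvlt : ∀ i : ZMod (2 * m), i.val / 2 < m := by
    intro i
    have := i.val_lt
    omega
  have hrinj : ∀ a b : ℕ, a < m → b < m → r ^ a = r ^ b → a = b := by
    intro a b ha hb hab
    exact pow_injOn_Iio_orderOf (x := r) (by rwa [Set.mem_Iio, ← hm]) (by rwa [Set.mem_Iio, ← hm]) hab
  have hmix : ∀ a b : ℤ, r ^ a ≠ s * r ^ b := by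
    intro a b h
    apply hsnot
    have : s = r ^ a * (r ^ b)⁻¹ := by rw [h]; group
    rw [this, ← zpow_neg, ← zpow_add]
    exact Subgroup.mem_zpowers_iff.mpr ⟨a + (-b), rfl⟩
  have hfinj : Function.Injective f := by
    intro i j hij
    by_cases pi : i.val % 2 = 0 <;> by_cases pj : j.val % 2 = 0
    · rw [hfeven i pi, hfeven j pj, zpow_natCast, zpow_natCast] at hij
      have := hrinj _ _ (hvlt i) (hvlt j) hij
      exact ZMod.val_injective _ (by omega)
    · rw [hfeven i pi, hfodd j pj] at hij
      exact absurd hij (hmix _ _)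
    · rw [hfodd i pi, hfeven j pj] at hij
      exact absurd hij.symm (hmix _ _)
    · rw [hfodd i pi, hfodd j pj] at hij
      have := mul_left_cancel hij
      rw [zpow_natCast, zpow_natCast] at this
      have := hrinj _ _ (hvlt i) (hvlt j) this
      exact ZMod.val_injective _ (by omega)
  have hzmod_red : ∀ c : ℤ, ∃ b : ℕ, b < m ∧ r ^ c = r ^ ((b : ℕ) : ℤ) := by
    intro c
    refine ⟨(c % m).toNat, ?_, ?_⟩
    · have h1 : 0 ≤ c % m := Int.emod_nonneg c (by omega : (m : ℤ) ≠ 0)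
      have h2 : c % m < m := Int.emod_lt_of_pos c (by omega : (0 : ℤ) < m)
      omega
    · have h1 : 0 ≤ c % m := Int.emod_nonneg c (by omega : (m : ℤ) ≠ 0)
      rw [Int.toNat_of_nonneg h1]
      rw [zpow_eq_zpow_iff_modEq, ← hm]
      exact (Int.emod_emod_of_dvd c dvd_rfl).symm
  have hfsurj : Function.Surjective f := by
    intro x
    obtain ⟨c, hc | hc⟩ := hK x
    · obtain ⟨b, hb, hrb⟩ := hzmod_red c
      refine ⟨((2 * b : ℕ) : ZMod (2 * m)), ?_⟩
      have hv : ((2 * b : ℕ) : ZMod (2 * m)).val = 2 * b := ZMod.val_cast_of_lt (by omega)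
      rw [hfeven _ (by rw [hv]; omega), hv, show (2 * b) / 2 = b from by omega, hc, hrb]
    · obtain ⟨b, hb, hrb⟩ := hzmod_red c
      refine ⟨((2 * b + 1 : ℕ) : ZMod (2 * m)), ?_⟩
      have hv : ((2 * b + 1 : ℕ) : ZMod (2 * m)).val = 2 * b + 1 := ZMod.val_cast_of_lt (by omega)
      rw [hfodd _ (by rw [hv]; omega), hv, show (2 * b + 1) / 2 = b from by omega, hc, hrb]
  have hfbij : Function.Bijective f := ⟨hfinj, hfsurj⟩
  have hcard : Fintype.card G = 2 * m := by
    rw [← Fintype.card_of_bijective hfbij, ZMod.card]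
  have hnm : NeZero m := ⟨by omega⟩
  -- helper equalities
  have hvc : ∀ u : ZMod m, ((u.val : ℤ) : ZMod m) = u := by
    intro u
    push_cast
    exact ZMod.natCast_rightInverse u
  have rEq : ∀ (u : ZMod m) (c : ℤ), u = (c : ZMod m) → r ^ ((u.val : ℤ)) = r ^ c := by
    intro u c h
    rw [zpow_eq_zpow_iff_modEq, ← hm]
    apply (ZMod.intCast_eq_intCast_iff _ _ _).mp
    rw [hvc, h]
  -- the isomorphism with the dihedral group
  have hiso : Nonempty (G ≃* DihedralGroup m) := by
    set φ0 : DihedralGroup m → G := fun x => match x with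
      | .r i => r ^ ((i.val : ℤ))
      | .sr i => s * r ^ ((i.val : ℤ)) with hφ0
    have hφmul : ∀ x y : DihedralGroup m, φ0 (x * y) = φ0 x * φ0 y := by
      rintro (i | i) (j | j)
      · rw [DihedralGroup.r_mul_r]
        show r ^ (((i + j).val : ℤ)) = r ^ ((i.val : ℤ)) * r ^ ((j.val : ℤ))
        rw [← zpow_add]
        exact rEq _ _ (by rw [Int.cast_add, hvc, hvc])
      · rw [DihedralGroup.r_mul_sr]
        show s * r ^ (((j - i).val : ℤ)) = r ^ ((i.val : ℤ)) * (s * r ^ ((j.val : ℤ)))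
        rw [← mul_assoc, hcomm ((i.val : ℤ)), mul_assoc, ← zpow_add]
        rw [rEq _ (-(i.val : ℤ) + (j.val : ℤ))
          (by rw [Int.cast_add, Int.cast_neg, hvc, hvc, neg_add_eq_sub])]
      · rw [DihedralGroup.sr_mul_r]
        show s * r ^ (((i + j).val : ℤ)) = (s * r ^ ((i.val : ℤ))) * r ^ ((j.val : ℤ))
        rw [mul_assoc, ← zpow_add]
        rw [rEq _ ((i.val : ℤ) + (j.val : ℤ)) (by rw [Int.cast_add, hvc, hvc])]
      · rw [DihedralGroup.sr_mul_sr]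
        show r ^ (((j - i).val : ℤ)) = (s * r ^ ((i.val : ℤ))) * (s * r ^ ((j.val : ℤ)))
        rw [show (s * r ^ ((i.val : ℤ))) * (s * r ^ ((j.val : ℤ)))
            = (s * r ^ ((i.val : ℤ)) * s) * r ^ ((j.val : ℤ)) from by group,
          hconj ((i.val : ℤ)), ← zpow_add]
        rw [rEq _ (-(i.val : ℤ) + (j.val : ℤ))
          (by rw [Int.cast_add, Int.cast_neg, hvc, hvc, neg_add_eq_sub])]
    set φ : DihedralGroup m →* G := MonoidHom.mk' φ0 hφmul with hφ
    have hφs : φ (DihedralGroup.sr 0) = s := by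
      show s * r ^ (((0 : ZMod m).val : ℤ)) = s
      rw [ZMod.val_zero]
      norm_num
    have hφt : φ (DihedralGroup.sr (-1)) = t := by
      show s * r ^ ((((-1 : ZMod m)).val : ℤ)) = t
      rw [rEq (-1 : ZMod m) (-1 : ℤ) (by rw [Int.cast_neg, Int.cast_one]), ← ht']
    have hφsurj : Function.Surjective φ := by
      have htop : (⊤ : Subgroup G) ≤ φ.range := by
        rw [← hgen]
        apply Subgroup.closure_le _ |>.mpr
        rintro x (rfl | rfl)
        · exact ⟨DihedralGroup.sr 0, hφs⟩
        · exact ⟨DihedralGroup.sr (-1), hφt⟩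
      intro x
      exact htop (Subgroup.mem_top x)
    have hφbij : Function.Bijective φ := by
      rw [Fintype.bijective_iff_surjective_and_card]
      exact ⟨hφsurj, by rw [DihedralGroup.card, hcard]⟩
    exact ⟨(MulEquiv.ofBijective φ hφbij).symm⟩
  -- adjacency
  have hinv2 : ∀ c : ℤ, (s * r ^ c)⁻¹ = s * r ^ c := by
    intro c
    rw [mul_inv_rev, sinv, ← zpow_neg, hcomm (-c), neg_neg]
  have hmeml : ∀ c : ℤ, r ^ c ∉ ({s, t} : Set G) := by
    intro c hc
    rcases hc with hc | hc
    · exact hsnot (hc ▸ Subgroup.mem_zpowers_iff.mpr ⟨c, rfl⟩)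
    · exact htnot (hc ▸ Subgroup.mem_zpowers_iff.mpr ⟨c, rfl⟩)
  have hmems : ∀ c : ℤ, (s * r ^ c ∈ ({s, t} : Set G)) ↔ ((m : ℤ) ∣ c ∨ (m : ℤ) ∣ c + 1) := by
    intro c
    rw [Set.mem_insert_iff, Set.mem_singleton_iff]
    constructor
    · rintro (h | h)
      · left
        rw [mul_eq_left] at h
        rw [hm]
        exact orderOf_dvd_iff_zpow_eq_one.mpr h
      · right
        rw [ht', mul_left_cancel_iff, zpow_eq_zpow_iff_modEq, ← hm, Int.modEq_iff_dvd] at h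
        rw [show (-1 - c : ℤ) = -(c + 1) from by ring, dvd_neg] at h
        exact h
    · rintro (h | h)
      · left
        rw [mul_eq_left]
        rw [hm] at h
        exact orderOf_dvd_iff_zpow_eq_one.mp h
      · right
        rw [ht', mul_left_cancel_iff, zpow_eq_zpow_iff_modEq, ← hm, Int.modEq_iff_dvd]
        rw [show (-1 - c : ℤ) = -(c + 1) from by ring, dvd_neg]
        exact h
  refine ⟨m, hm2, hcard, hiso, f, hfbij, ?_⟩
  intro i j
  have htr : (j = i + 1 ∨ j = i - 1) ↔
      (((2 * m : ℕ) : ℤ) ∣ ((i.val : ℤ) + 1 - (j.val : ℤ)) ∨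
       ((2 * m : ℕ) : ℤ) ∣ ((i.val : ℤ) - 1 - (j.val : ℤ))) := by
    have e1 : (1 : ZMod (2 * m)) = ((1 : ℤ) : ZMod (2 * m)) := by norm_cast
    have e2 : i - 1 = i + ((-1 : ℤ) : ZMod (2 * m)) := by
      rw [Int.cast_neg, Int.cast_one, sub_eq_add_neg]
    rw [e2, show i + 1 = i + ((1 : ℤ) : ZMod (2 * m)) from by rw [Int.cast_one],
      zmod_eq_add_iff, zmod_eq_add_iff,
      show (i.val : ℤ) + -1 - (j.val : ℤ) = (i.val : ℤ) - 1 - (j.val : ℤ) from by ring]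
  have h2dvd : (2 : ℤ) ∣ ((2 * m : ℕ) : ℤ) := by
    push_cast
    exact Dvd.intro _ rfl
  by_cases pi : i.val % 2 = 0 <;> by_cases pj : j.val % 2 = 0
  · -- even, even: not adjacent
    have heq : f i * (f j)⁻¹ = r ^ (((i.val / 2 : ℕ) : ℤ) - ((j.val / 2 : ℕ) : ℤ)) := by
      rw [hfeven i pi, hfeven j pj, ← zpow_sub]
    rw [heq, htr]
    simp only [hmeml, false_iff]
    rintro (h | h) <;> [skip; skip] <;>
      · have := dvd_trans h2dvd h
        omega
  · -- even i, odd j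
    have heq : f i * (f j)⁻¹ = s * r ^ (-((i.val / 2 : ℕ) : ℤ) + ((j.val / 2 : ℕ) : ℤ)) := by
      rw [hfeven i pi, hfodd j pj, hinv2, ← mul_assoc, hcomm ((i.val / 2 : ℕ) : ℤ), mul_assoc,
        ← zpow_add]
    rw [heq, hmems, htr]
    have hA : ((i.val : ℤ)) = 2 * ((i.val / 2 : ℕ) : ℤ) := by omega
    have hB : ((j.val : ℤ)) = 2 * ((j.val / 2 : ℕ) : ℤ) + 1 := by omega
    have hM : ((2 * m : ℕ) : ℤ) = 2 * (m : ℤ) := by push_cast; ring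
    rw [hA, hB, hM]
    set A := ((i.val / 2 : ℕ) : ℤ)
    set B := ((j.val / 2 : ℕ) : ℤ)
    constructor
    · rintro (⟨k, hk⟩ | ⟨k, hk⟩)
      · left; exact ⟨-k, by linear_combination -2 * hk⟩
      · right; exact ⟨-k, by linear_combination -2 * hk⟩
    · rintro (⟨k, hk⟩ | ⟨k, hk⟩)
      · left
        refine ⟨-k, mul_left_cancel₀ (two_ne_zero) ?_⟩
        linear_combination -hk
      · right
        refine ⟨-k, mul_left_cancel₀ (two_ne_zero) ?_⟩
        linear_combination -hk
  · -- odd i, even j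
    have heq : f i * (f j)⁻¹ = s * r ^ (((i.val / 2 : ℕ) : ℤ) - ((j.val / 2 : ℕ) : ℤ)) := by
      rw [hfodd i pi, hfeven j pj, ← zpow_neg, mul_assoc, ← zpow_add, ← sub_eq_add_neg]
    rw [heq, hmems, htr]
    have hA : ((i.val : ℤ)) = 2 * ((i.val / 2 : ℕ) : ℤ) + 1 := by omega
    have hB : ((j.val : ℤ)) = 2 * ((j.val / 2 : ℕ) : ℤ) := by omega
    have hM : ((2 * m : ℕ) : ℤ) = 2 * (m : ℤ) := by push_cast; ring
    rw [hA, hB, hM]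
    set A := ((i.val / 2 : ℕ) : ℤ)
    set B := ((j.val / 2 : ℕ) : ℤ)
    constructor
    · rintro (⟨k, hk⟩ | ⟨k, hk⟩)
      · right; exact ⟨k, by linear_combination 2 * hk⟩
      · left; exact ⟨k, by linear_combination 2 * hk⟩
    · rintro (⟨k, hk⟩ | ⟨k, hk⟩)
      · right
        refine ⟨k, mul_left_cancel₀ (two_ne_zero) ?_⟩
        linear_combination hk
      · left
        refine ⟨k, mul_left_cancel₀ (two_ne_zero) ?_⟩
        linear_combination hk
  · -- odd, odd: not adjacent
    have heq : f i * (f j)⁻¹ = r ^ (((j.val / 2 : ℕ) : ℤ) - ((i.val / 2 : ℕ) : ℤ)) := by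
      rw [hfodd i pi, hfodd j pj, hinv2]
      rw [show (s * r ^ ((i.val / 2 : ℕ) : ℤ)) * (s * r ^ ((j.val / 2 : ℕ) : ℤ))
          = (s * r ^ ((i.val / 2 : ℕ) : ℤ) * s) * r ^ ((j.val / 2 : ℕ) : ℤ) from by group,
        hconj, ← zpow_add, neg_add_eq_sub]
    rw [heq, htr]
    simp only [hmeml, false_iff]
    rintro (h | h) <;> [skip; skip] <;>
      · have := dvd_trans h2dvd h
        omega

end CaseB


theorem stmt_10 {G : Type*} [Group G] [Fintype G] (n : ℕ)
    (hn : Fintype.card G = n) (S : Set G)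
    (hgen : Subgroup.closure S = ⊤) (he : (1 : G) ∉ S) (hinv : S⁻¹ = S)
    (hcard : S.ncard = 2) :
    signedDomNum (cayleyGraph S) = (n : ℤ) - 4 ↔
      (Nonempty (G ≃* Multiplicative (ZMod 6)) ∨
       Nonempty (G ≃* Multiplicative (ZMod 7)) ∨
       Nonempty (G ≃* Multiplicative (ZMod 8)) ∨
       Nonempty (G ≃* Equiv.Perm (Fin 3)) ∨
       Nonempty (G ≃* DihedralGroup 4)) := by
  classical
  obtain ⟨a, b, hab, hS⟩ := Set.ncard_eq_two.mp hcard
  have haS : a ∈ S := by rw [hS]; left; rfl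
  have hbS : b ∈ S := by rw [hS]; right; rfl
  have ha1 : a ≠ 1 := by rintro rfl; exact he haS
  have hb1 : b ≠ 1 := by rintro rfl; exact he hbS
  have hadj : ∀ x y : G, (cayleyGraph S).Adj x y ↔ x * y⁻¹ ∈ S := cayley_adj S he hinv
  have hainv : a⁻¹ ∈ S := by rw [← hinv, Set.mem_inv, inv_inv]; exact haS
  have hbinv : b⁻¹ ∈ S := by rw [← hinv, Set.mem_inv, inv_inv]; exact hbS
  have hback : (Nonempty (G ≃* Multiplicative (ZMod 6)) ∨
       Nonempty (G ≃* Multiplicative (ZMod 7)) ∨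
       Nonempty (G ≃* Multiplicative (ZMod 8)) ∨
       Nonempty (G ≃* Equiv.Perm (Fin 3)) ∨
       Nonempty (G ≃* DihedralGroup 4)) → (n = 6 ∨ n = 7 ∨ n = 8) := by
    rintro (e | e | e | e | e) <;> obtain ⟨e⟩ := e
    · left
      have hc := Fintype.card_congr e.toEquiv
      rw [hn] at hc
      simpa using hc
    · right; left
      have hc := Fintype.card_congr e.toEquiv
      rw [hn] at hc
      simpa using hc
    · right; right
      have hc := Fintype.card_congr e.toEquiv
      rw [hn] at hc
      simpa using hc
    · left
      have hc := Fintype.card_congr e.toEquiv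
      rw [hn] at hc
      simpa [Fintype.card_perm, Nat.factorial] using hc
    · right; right
      have hc := Fintype.card_congr e.toEquiv
      rw [hn, DihedralGroup.card] at hc
      omega
  rw [hS] at hainv
  rcases hainv with hx | hx
  · -- a is an involution, so is b : dihedral case
    have hy : b⁻¹ = b := by
      rw [hS] at hbinv
      rcases hbinv with h | h
      · exfalso
        apply hab
        rw [← hx, ← h, inv_inv]
      · exact h
    have haa : a * a = 1 := by nth_rewrite 2 [← hx]; exact mul_inv_cancel a
    have hbb : b * b = 1 := by nth_rewrite 2 [← hy]; exact mul_inv_cancel b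
    obtain ⟨m, hm2, hcardG, hiso, f, hfbij, hfadj⟩ :=
      caseB a b haa hbb ha1 hb1 hab (by rw [← hS]; exact hgen)
    have hn2m : n = 2 * m := by rw [← hn, hcardG]
    have hcycadj : ∀ i j : ZMod (2 * m),
        (cayleyGraph S).Adj (f i) (f j) ↔ (j = i + 1 ∨ j = i - 1) := by
      intro i j
      rw [hadj, hS]
      exact hfadj i j
    have hkey := signedDomNum_cycle (by omega : 3 ≤ 2 * m) (cayleyGraph S)
      (by rw [hcardG]) f hfbij hcycadj
    rw [hn2m, hkey]
    constructor
    · intro hl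
      have hm34 : m = 3 ∨ m = 4 := by omega
      rcases hm34 with rfl | rfl
      · obtain ⟨e⟩ := hiso
        exact Or.inr (Or.inr (Or.inr (Or.inl ⟨e.trans d3S3⟩)))
      · exact Or.inr (Or.inr (Or.inr (Or.inr hiso)))
    · intro hr
      have := hback hr
      omega
  · -- a has order ≥ 3 : cyclic case
    have haa' : a * a ≠ 1 := by
      intro h
      have h2 : a⁻¹ = a := inv_eq_of_mul_eq_one_right h
      exact hab (h2.symm.trans hx)
    have hgen' : ∀ x : G, x ∈ Subgroup.zpowers a := by
      have hle : Subgroup.closure S ≤ Subgroup.zpowers a := by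
        apply Subgroup.closure_le _ |>.mpr
        rw [hS]
        intro x hx'
        simp only [Set.mem_insert_iff, Set.mem_singleton_iff] at hx'
        rcases hx' with h | h
        · rw [h]; exact Subgroup.mem_zpowers a
        · rw [h, ← hx]
          exact Subgroup.mem_zpowers_iff.mpr ⟨-1, by rw [zpow_neg_one]⟩
      rw [hgen] at hle
      intro x
      exact hle (Subgroup.mem_top x)
    obtain ⟨h3n, hcyc, f, hfbij, hfadj⟩ := caseA n hn a ha1 haa' hgen'
    have hcycadj : ∀ i j : ZMod n,
        (cayleyGraph S).Adj (f i) (f j) ↔ (j = i + 1 ∨ j = i - 1) := by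
      intro i j
      rw [hadj, hS, ← hx]
      exact hfadj i j
    have hkey := signedDomNum_cycle h3n (cayleyGraph S) hn f hfbij hcycadj
    rw [hkey]
    have hnc : Nat.card G = n := by rw [Nat.card_eq_fintype_card, hn]
    constructor
    · intro hl
      have hn678 : n = 6 ∨ n = 7 ∨ n = 8 := by omega
      rcases hn678 with rfl | rfl | rfl
      · exact Or.inl (cyclic_iso hcyc hnc)
      · exact Or.inr (Or.inl (cyclic_iso hcyc hnc))
      · exact Or.inr (Or.inr (Or.inl (cyclic_iso hcyc hnc)))
    · intro hr
      have := hback hr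
      omega
end
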